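/- Let G be a 2-connected graph, C a longest cycle in G, and suppose N_C(x₁) = N_C(x₂) = {y₁} is a single vertex for the endpoints x₁, x₂ of a longest path P in G \ C of length p ≥ 2. Then there exists an edge zw with z an internal vertex of P and w ∈ V(C) \ {y₁}, and moreover x₂z⁻ ∈ E(G) where z⁻ is the predecessor of z on P, provided p = δ − 1 and |N_C(x₂)| = 1. -/

import Mathlib

open SimpleGraph Finset

namespace Paper

variable {V : Type*}

/-- Number of connected components of `G` after deleting the vertex set `S`. -/
noncomputable def compCount (G : SimpleGraph V) (S : Set V) : ℕ :=
  Nat.card ((G.induce Sᶜ).ConnectedComponent)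

/-- `G` is 1-tough: every cutset `S` satisfies `|S| ≥ s(G \ S)`. -/
def OneTough [Fintype V] (G : SimpleGraph V) : Prop :=
  ∀ S : Finset V, 1 < compCount G ↑S → compCount G ↑S ≤ S.card

/-- The toughness of `G` equals 1. -/
def ToughnessEqOne [Fintype V] (G : SimpleGraph V) : Prop :=
  OneTough G ∧ ∃ S : Finset V, 1 < compCount G ↑S ∧ compCount G ↑S = S.card

/-- The vertex connectivity of `G` equals 2. -/
def ConnectivityEqTwo [Fintype V] (G : SimpleGraph V) : Prop :=
  (∀ S : Finset V, S.card ≤ 1 → (G.induce (↑S : Set V)ᶜ).Connected) ∧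
  ∃ S : Finset V, S.card = 2 ∧ ¬ (G.induce (↑S : Set V)ᶜ).Connected

/-- `G` is 3-connected: it stays connected after removing any 2 vertices. -/
def ThreeConnected [Fintype V] (G : SimpleGraph V) : Prop :=
  ∀ S : Finset V, S.card ≤ 2 → (G.induce (↑S : Set V)ᶜ).Connected

/-- `c` is a longest cycle of `G`. -/
def IsLongestCycle {G : SimpleGraph V} {u : V} (c : G.Walk u u) : Prop :=
  c.IsCycle ∧ ∀ (v : V) (d : G.Walk v v), d.IsCycle → d.length ≤ c.length

/-- The cycle `c` is dominating: `G \ V(c)` is edgeless. -/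
def IsDominating {G : SimpleGraph V} {u : V} (c : G.Walk u u) : Prop :=
  ∀ a b : V, G.Adj a b → a ∈ c.support ∨ b ∈ c.support

/-- The walk `p` avoids all vertices of the cycle `c`. -/
def AvoidsCycle {G : SimpleGraph V} {u x y : V} (c : G.Walk u u) (p : G.Walk x y) : Prop :=
  ∀ v ∈ p.support, v ∉ c.support

/-- `p` is a longest path of `G \ V(c)`. -/
def IsLongestPathOutside {G : SimpleGraph V} {u x y : V} (c : G.Walk u u)
    (p : G.Walk x y) : Prop :=
  p.IsPath ∧ AvoidsCycle c p ∧
  ∀ (a b : V) (q : G.Walk a b), q.IsPath → AvoidsCycle c q → q.length ≤ p.length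

/-- `N_C(x)`: the neighbors of `x` lying on the cycle `c`. -/
def NC [Fintype V] [DecidableEq V] (G : SimpleGraph V) [DecidableRel G.Adj]
    {u : V} (c : G.Walk u u) (x : V) : Finset V :=
  (G.neighborFinset x).filter (fun v => v ∈ c.support)

/-- The interior vertices of a segment (the walk minus its endpoints). -/
def interior {G : SimpleGraph V} {a b : V} (I : G.Walk a b) : Set V :=
  {v | v ∈ I.support ∧ v ≠ a ∧ v ≠ b}

/-- `I` is an elementary segment of the cycle `c` created by the attachment set `A`:
an arc of `c` between consecutive vertices of `A`. -/
def IsSegment {G : SimpleGraph V} {u : V} (c : G.Walk u u)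
    (A : Finset V) {a b : V} (I : G.Walk a b) : Prop :=
  I.IsPath ∧ 1 ≤ I.length ∧ a ∈ A ∧ b ∈ A ∧
  (∀ v ∈ I.support, v ∈ c.support) ∧
  (∀ e ∈ I.edges, e ∈ c.edges) ∧
  ∀ v ∈ interior I, v ∉ A

/-- `L` is an intermediate path between the elementary segments `Ia` and `Ib`:
it joins interior vertices of `Ia` and `Ib` and is internally disjoint from `c ∪ P`. -/
def IsIntermediatePath {G : SimpleGraph V} {u x y : V} (c : G.Walk u u) (P : G.Walk x y)
    {a b a' b' z w : V} (Ia : G.Walk a b) (Ib : G.Walk a' b') (L : G.Walk z w) : Prop :=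
  L.IsPath ∧ 1 ≤ L.length ∧ z ∈ interior Ia ∧ w ∈ interior Ib ∧
  ∀ v ∈ L.support, (v ∈ c.support ∨ v ∈ P.support) → v = z ∨ v = w

/-- Membership in the exceptional class `𝔉₁`. -/
def InF1 [Fintype V] (H : SimpleGraph V) [DecidableRel H.Adj] (d : ℕ) : Prop :=
  ∃ (x y₁ y₂ y₃ : V) (A : Fin 3 → Set V),
    (∀ i j, i ≠ j → A i ∩ A j = {x}) ∧
    (⋃ i, A i) = Set.univ ∧
    y₁ ∈ A 0 ∧ y₂ ∈ A 1 ∧ y₃ ∈ A 2 ∧ y₁ ≠ x ∧ y₂ ≠ x ∧ y₃ ≠ x ∧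
    H.Adj y₁ y₂ ∧ H.Adj y₂ y₃ ∧ H.Adj y₁ y₃ ∧
    (∀ a b : V, H.Adj a b → (∃ i, a ∈ A i ∧ b ∈ A i) ∨
      s(a, b) ∈ ({s(y₁, y₂), s(y₂, y₃), s(y₁, y₃)} : Set (Sym2 V))) ∧
    (∀ i, (H.induce (A i)).Connected) ∧
    Nat.card (A 0) = d + 1 ∧ Nat.card (A 1) = d + 1 ∧
    d + 1 ≤ Nat.card (A 2) ∧ Nat.card (A 2) ≤ d + 2 ∧
    H.minDegree = d ∧ 3 ≤ d

/-- Membership in the exceptional class `𝔉₂`. -/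
def InF2 [Fintype V] (H : SimpleGraph V) [DecidableRel H.Adj] : Prop :=
  ∃ (x z y₁ y₂ y₃ : V) (A : Fin 3 → Set V),
    (∀ i j, i ≠ j → A i ∩ A j = {x}) ∧
    ((⋃ i, A i) ∪ {z}) = Set.univ ∧ z ∉ ⋃ i, A i ∧
    y₁ ∈ A 0 ∧ y₂ ∈ A 1 ∧ y₃ ∈ A 2 ∧ y₁ ≠ x ∧ y₂ ≠ x ∧ y₃ ≠ x ∧
    H.Adj z y₁ ∧ H.Adj z y₂ ∧ H.Adj z y₃ ∧ H.Adj y₁ y₂ ∧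
    (∀ a b : V, H.Adj a b → (∃ i, a ∈ A i ∧ b ∈ A i) ∨
      s(a, b) ∈ ({s(z, y₁), s(z, y₂), s(z, y₃), s(y₁, y₂), s(y₁, y₃), s(y₂, y₃),
        s(z, x)} : Set (Sym2 V))) ∧
    (∀ i, Nat.card (A i) = 4) ∧ H.minDegree = 3

/-- Membership in the exceptional class `𝔉₃`. -/
def InF3 [Fintype V] (H : SimpleGraph V) [DecidableRel H.Adj] : Prop :=
  ∃ (x z y₁ y₂ y₃ : V) (A : Fin 3 → Set V),
    (∀ i j, i ≠ j → A i ∩ A j = {x}) ∧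
    ((⋃ i, A i) ∪ {z}) = Set.univ ∧ z ∉ ⋃ i, A i ∧
    y₁ ∈ A 0 ∧ y₂ ∈ A 1 ∧ y₃ ∈ A 2 ∧ y₁ ≠ x ∧ y₂ ≠ x ∧ y₃ ≠ x ∧
    H.Adj z y₁ ∧ H.Adj z y₂ ∧ H.Adj z y₃ ∧ H.Adj z x ∧ H.Adj y₁ y₂ ∧
    (∀ a b : V, H.Adj a b → (∃ i, a ∈ A i ∧ b ∈ A i) ∨
      s(a, b) ∈ ({s(z, y₁), s(z, y₂), s(z, y₃), s(z, x), s(y₁, y₂), s(y₁, y₃),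
        s(y₂, y₃)} : Set (Sym2 V))) ∧
    (∀ i, Nat.card (A i) = 5) ∧ H.minDegree = 4

/-- Membership in the exceptional class `𝔉₄`. -/
def InF4 [Fintype V] (H : SimpleGraph V) [DecidableRel H.Adj] : Prop :=
  ∃ (x y : V) (z : Fin 4 → V) (A : Fin 4 → Set V),
    x ≠ y ∧
    (∀ i j, i ≠ j → A i ∩ A j = {x, y}) ∧
    (⋃ i, A i) = Set.univ ∧
    (∀ i, z i ∈ A i ∧ z i ≠ x ∧ z i ≠ y) ∧
    H.Adj (z 0) (z 1) ∧ H.Adj (z 1) (z 2) ∧ H.Adj (z 0) (z 2) ∧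
    (∀ a b : V, H.Adj a b → (∃ i, a ∈ A i ∧ b ∈ A i) ∨
      s(a, b) ∈ ({s(z 0, z 1), s(z 1, z 2), s(z 0, z 2)} : Set (Sym2 V))) ∧
    (∀ i, Nat.card (A i) = 5) ∧ H.minDegree = 4

lemma cross_walk {W : Type*} {H : SimpleGraph W} (T : Set W) :
    ∀ {a b : W} (_ : H.Walk a b), a ∈ T → b ∉ T → ∃ z w, H.Adj z w ∧ z ∈ T ∧ w ∉ T := by
  intro a b q
  induction q with
  | nil => intro h1 h2; exact absurd h1 h2
  | @cons x y z h q ih =>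
    intro h1 h2
    by_cases hm : y ∈ T
    · exact ih hm h2
    · exact ⟨x, y, h, h1, hm⟩

lemma pred_spec [DecidableEq V] {G : SimpleGraph V} :
    ∀ {a b : V} (q : G.Walk a b), q.support.Nodup → ∀ {z}, z ∈ q.support → z ≠ a →
      ∃ zp, s(zp, z) ∈ q.edges ∧ q.support.idxOf zp + 1 = q.support.idxOf z ∧ zp ≠ b := by
  intro a b q
  induction q with
  | nil =>
    intro _ z hz hza
    simp only [SimpleGraph.Walk.support_nil, List.mem_singleton] at hz
    exact absurd hz hza
  | @cons x y w h q ih =>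
    intro hnd z hz hza
    rw [SimpleGraph.Walk.support_cons] at hnd hz ⊢
    have hxnot : x ∉ q.support := (List.nodup_cons.mp hnd).1
    have hndq : q.support.Nodup := (List.nodup_cons.mp hnd).2
    have hzq : z ∈ q.support := by
      rcases List.mem_cons.mp hz with h' | h'
      · exact absurd h' hza
      · exact h'
    by_cases hzy : z = y
    · refine ⟨x, ?_, ?_, ?_⟩
      · rw [SimpleGraph.Walk.edges_cons]
        exact List.mem_cons.mpr (Or.inl (by rw [hzy]))
      · rw [List.idxOf_cons_self]
        have hhead : q.support = y :: q.support.tail := q.support_eq_cons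
        rw [List.idxOf_cons_ne _ (Ne.symm hza), hhead, hzy, List.idxOf_cons_self]
      · intro hxb
        exact hxnot (hxb ▸ q.end_mem_support)
    · obtain ⟨zp, he, hidx, hne⟩ := ih hndq hzq hzy
      have hzpq : zp ∈ q.support := q.fst_mem_support_of_mem_edges he
      have hzpx : zp ≠ x := fun hh => hxnot (hh ▸ hzpq)
      refine ⟨zp, List.mem_cons.mpr (Or.inr he), ?_, hne⟩
      rw [List.idxOf_cons_ne _ (Ne.symm hzpx), List.idxOf_cons_ne _ (Ne.symm hza)]
      omega

lemma end_edge_not_mem {G : SimpleGraph V} {a b : V} (P : G.Walk a b) (hP : P.IsPath)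
    (h2 : 2 ≤ P.length) : s(b, a) ∉ P.edges := by
  cases P with
  | nil => simp
  | @cons x y w h q =>
    intro hmem
    rw [SimpleGraph.Walk.edges_cons, List.mem_cons] at hmem
    rw [SimpleGraph.Walk.cons_isPath_iff] at hP
    rcases hmem with h1 | h1
    · rw [Sym2.eq_iff] at h1
      rcases h1 with ⟨rfl, rfl⟩ | ⟨rfl, -⟩
      · exact G.irrefl h
      · have : q = SimpleGraph.Walk.nil := (SimpleGraph.Walk.isPath_iff_eq_nil (p := q)).mp hP.1
        rw [SimpleGraph.Walk.length_cons, this] at h2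
        simp at h2
    · exact hP.2 (q.snd_mem_support_of_mem_edges h1)

lemma ILPO.reverse {G : SimpleGraph V} {u x y : V} {c : G.Walk u u} {p : G.Walk x y}
    (h : IsLongestPathOutside c p) : IsLongestPathOutside c p.reverse := by
  refine ⟨h.1.reverse, ?_, ?_⟩
  · intro v hv
    exact h.2.1 v (by rwa [Walk.support_reverse, List.mem_reverse] at hv)
  · intro a b q hq hav
    rw [Walk.length_reverse]
    exact h.2.2 a b q hq hav

lemma nbr_endpoint {G : SimpleGraph V} {u x₁ x₂ : V} {c : G.Walk u u} {P : G.Walk x₁ x₂}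
    (hP : IsLongestPathOutside c P) {v : V} (hadj : G.Adj x₁ v) (hvc : v ∉ c.support) :
    v ∈ P.support := by
  by_contra hvP
  have hQ : (Walk.cons hadj.symm P).IsPath := hP.1.cons hvP
  have hav : AvoidsCycle c (Walk.cons hadj.symm P) := by
    intro w hw
    rw [Walk.support_cons, List.mem_cons] at hw
    rcases hw with rfl | hw
    · exact hvc
    · exact hP.2.1 w hw
  have := hP.2.2 v x₂ (Walk.cons hadj.symm P) hQ hav
  rw [Walk.length_cons] at this
  omega

lemma adj_end_all [Fintype V] [DecidableEq V] {G : SimpleGraph V} [DecidableRel G.Adj]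
    {u x₁ x₂ y₁ : V} {c : G.Walk u u} {P : G.Walk x₁ x₂}
    (hP : IsLongestPathOutside c P) (hpd : P.length + 1 = G.minDegree)
    (h1 : NC G c x₁ = {y₁}) :
    ∀ w ∈ P.support, w ≠ x₁ → G.Adj x₁ w := by
  classical
  have hy : y₁ ∈ NC G c x₁ := h1 ▸ Finset.mem_singleton_self y₁
  rw [NC, Finset.mem_filter, SimpleGraph.mem_neighborFinset] at hy
  set F : Finset V := insert y₁ (P.support.toFinset.erase x₁) with hF
  have hsub : G.neighborFinset x₁ ⊆ F := by
    intro v hv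
    rw [SimpleGraph.mem_neighborFinset] at hv
    by_cases hvc : v ∈ c.support
    · have : v ∈ NC G c x₁ := by
        rw [NC, Finset.mem_filter, SimpleGraph.mem_neighborFinset]; exact ⟨hv, hvc⟩
      rw [h1, Finset.mem_singleton] at this
      rw [this]; exact Finset.mem_insert_self _ _
    · have hvP : v ∈ P.support := nbr_endpoint hP hv hvc
      exact Finset.mem_insert_of_mem
        (Finset.mem_erase.mpr ⟨hv.ne', List.mem_toFinset.mpr hvP⟩)
  have hcards : P.support.toFinset.card = P.length + 1 := by
    rw [List.toFinset_card_of_nodup hP.1.support_nodup, Walk.length_support]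
  have hcarde : (P.support.toFinset.erase x₁).card = P.length := by
    rw [Finset.card_erase_of_mem (List.mem_toFinset.mpr P.start_mem_support), hcards]
    omega
  have hcardF : F.card ≤ P.length + 1 := by
    calc F.card ≤ (P.support.toFinset.erase x₁).card + 1 := Finset.card_insert_le _ _
    _ = P.length + 1 := by rw [hcarde]
  have hdeg : P.length + 1 ≤ (G.neighborFinset x₁).card := by
    have h3 := G.minDegree_le_degree x₁
    have h4 := G.card_neighborFinset_eq_degree x₁
    omega
  have heq : F = G.neighborFinset x₁ :=
    (Finset.eq_of_subset_of_card_le hsub (le_trans hcardF hdeg)).symm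
  intro w hw hwx
  have : w ∈ F := Finset.mem_insert_of_mem
    (Finset.mem_erase.mpr ⟨hwx, List.mem_toFinset.mpr hw⟩)
  rw [heq, SimpleGraph.mem_neighborFinset] at this
  exact this

lemma length_rotate' {G : SimpleGraph V} [DecidableEq V] {u v : V} (c : G.Walk v v)
    (h : u ∈ c.support) : (c.rotate u h).length = c.length := by
  have h2 := congrArg Walk.length (c.take_spec h)
  rw [Walk.length_append] at h2
  rw [Walk.rotate, Walk.length_append]
  omega

lemma rot_absorb [DecidableEq V] {G : SimpleGraph V} {u x₁ x₂ : V} {c : G.Walk u u}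
    {P : G.Walk x₁ x₂} (hP : IsLongestPathOutside c P) (h2 : 2 ≤ P.length)
    (hx : G.Adj x₂ x₁) {z v : V} (hz : z ∈ P.support) (hadj : G.Adj z v)
    (hvC : v ∉ c.support) : v ∈ P.support := by
  by_contra hvP
  have hPne : s(x₂, x₁) ∉ P.edges := end_edge_not_mem P hP.1 h2
  have hcyc : (Walk.cons hx P).IsCycle := (Walk.cons_isCycle_iff P hx).2 ⟨hP.1, hPne⟩
  set Cp := Walk.cons hx P with hCp
  have hzc : z ∈ Cp.support := by
    rw [hCp, Walk.support_cons]; exact List.mem_cons.mpr (Or.inr hz)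
  have hRcyc : (Cp.rotate z hzc).IsCycle := hcyc.rotate hzc
  obtain ⟨z', hadj', R, heq⟩ := Walk.not_nil_iff.mp hRcyc.not_nil
  have hRpath : R.IsPath := by
    rw [heq] at hRcyc
    exact ((Walk.cons_isCycle_iff R hadj').mp hRcyc).1
  have hsubCp : ∀ w ∈ (Cp.rotate z hzc).support, w ∈ Cp.support := by
    intro w hw
    rw [Walk.support_eq_cons, List.mem_cons] at hw
    rcases hw with rfl | hw
    · exact hzc
    · exact List.mem_of_mem_tail (((Walk.support_rotate Cp z hzc).mem_iff).mp hw)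
  have hRsub : ∀ w ∈ R.support, w ∈ Cp.support := by
    intro w hw
    exact hsubCp w (by rw [heq, Walk.support_cons]; exact List.mem_cons.mpr (Or.inr hw))
  have hCpP : ∀ w ∈ Cp.support, w ∈ P.support := by
    intro w hw
    rw [hCp, Walk.support_cons, List.mem_cons] at hw
    rcases hw with rfl | hw
    · exact P.end_mem_support
    · exact hw
  have hQpath : (Walk.cons hadj.symm R.reverse).IsPath := by
    refine hRpath.reverse.cons ?_
    rw [Walk.support_reverse, List.mem_reverse]
    intro hvR
    exact hvP (hCpP v (hRsub v hvR))
  have hav : AvoidsCycle c (Walk.cons hadj.symm R.reverse) := by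
    intro w hw
    rw [Walk.support_cons, List.mem_cons] at hw
    rcases hw with rfl | hw
    · exact hvC
    · rw [Walk.support_reverse, List.mem_reverse] at hw
      exact hP.2.1 w (hCpP w (hRsub w hw))
  have hle := hP.2.2 v z' (Walk.cons hadj.symm R.reverse) hQpath hav
  have hlenR : R.length + 1 = Cp.length := by
    have := length_rotate' Cp hzc
    rw [heq, Walk.length_cons] at this
    omega
  rw [Walk.length_cons, Walk.length_reverse] at hle
  rw [hCp, Walk.length_cons] at hlenR
  omega

theorem stmt_18 [Fintype V] [DecidableEq V] (G : SimpleGraph V) [DecidableRel G.Adj]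
    (h2c : ∀ S : Finset V, S.card ≤ 1 → (G.induce (↑S : Set V)ᶜ).Connected)
    {u x₁ x₂ y₁ : V} (c : G.Walk u u) (P : G.Walk x₁ x₂)
    (hc : IsLongestCycle c) (hP : IsLongestPathOutside c P)
    (hp : 2 ≤ P.length) (hpd : P.length + 1 = G.minDegree)
    (h1 : NC G c x₁ = {y₁}) (h2 : NC G c x₂ = {y₁}) :
    ∃ z w zp : V, z ∈ P.support ∧ z ≠ x₁ ∧ z ≠ x₂ ∧
      w ∈ c.support ∧ w ≠ y₁ ∧ G.Adj z w ∧
      s(zp, z) ∈ P.edges ∧ P.support.idxOf zp + 1 = P.support.idxOf z ∧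
      G.Adj x₂ zp := by
  classical
  have hy1 : G.Adj x₁ y₁ ∧ y₁ ∈ c.support := by
    have h := h1 ▸ Finset.mem_singleton_self y₁
    rwa [NC, Finset.mem_filter, SimpleGraph.mem_neighborFinset] at h
  have hx1c : x₁ ∉ c.support := hP.2.1 x₁ P.start_mem_support
  have hx2c : x₂ ∉ c.support := hP.2.1 x₂ P.end_mem_support
  have hx1y : x₁ ≠ y₁ := fun h => hx1c (h ▸ hy1.2)
  have hx12 : x₁ ≠ x₂ := by
    intro h
    subst h
    have hnil := (Walk.isPath_iff_eq_nil (p := P)).mp hP.1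
    rw [hnil] at hp
    simp at hp
  have hadj2 : ∀ w ∈ P.support, w ≠ x₂ → G.Adj x₂ w := by
    have hrev := adj_end_all (ILPO.reverse hP) (by rw [Walk.length_reverse]; exact hpd) h2
    intro w hw hwx
    exact hrev w (by rwa [Walk.support_reverse, List.mem_reverse]) hwx
  have hx21 : G.Adj x₂ x₁ := hadj2 x₁ P.start_mem_support hx12
  obtain ⟨w₀, hw₀c, hw₀y⟩ : ∃ w₀, w₀ ∈ c.support ∧ w₀ ≠ y₁ := by
    have hnd := hc.1.support_nodup
    have hlen : 3 ≤ c.support.tail.length := by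
      have h3 := hc.1.three_le_length
      have h4 := c.length_support
      have h5 : c.support.tail.length = c.support.length - 1 := List.length_tail
      omega
    obtain ⟨a, t1, ht1⟩ := List.exists_cons_of_ne_nil
      (l := c.support.tail) (by intro h; rw [h] at hlen; simp at hlen)
    obtain ⟨b, t2, ht2⟩ := List.exists_cons_of_ne_nil
      (l := t1) (by intro h; rw [h] at ht1; rw [ht1] at hlen; simp at hlen)
    rw [ht2] at ht1
    rw [ht1] at hnd
    have hab : a ≠ b := by
      rcases List.nodup_cons.mp hnd with ⟨ha, -⟩
      exact fun h => ha (h ▸ List.mem_cons_self (a := b) (l := t2))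
    have hamem : a ∈ c.support := List.mem_of_mem_tail (ht1 ▸ List.mem_cons_self (a := a))
    have hbmem : b ∈ c.support :=
      List.mem_of_mem_tail (ht1 ▸ List.mem_cons.mpr (Or.inr (List.mem_cons_self (a := b) (l := t2))))
    by_cases hay : a = y₁
    · exact ⟨b, hbmem, fun h => hab (hay ▸ h ▸ rfl)⟩
    · exact ⟨a, hamem, hay⟩
  have hconn := h2c {y₁} (by simp)
  have hx1mem : x₁ ∈ (↑({y₁} : Finset V) : Set V)ᶜ := by
    simp only [Finset.coe_singleton, Set.mem_compl_iff, Set.mem_singleton_iff]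
    exact hx1y
  have hw₀mem : w₀ ∈ (↑({y₁} : Finset V) : Set V)ᶜ := by
    simp only [Finset.coe_singleton, Set.mem_compl_iff, Set.mem_singleton_iff]
    exact hw₀y
  obtain ⟨q⟩ := hconn.preconnected ⟨x₁, hx1mem⟩ ⟨w₀, hw₀mem⟩
  obtain ⟨zs, ws, hadjzw, hzT, hwT⟩ :=
    cross_walk {a : ((↑({y₁} : Finset V) : Set V)ᶜ : Set V) | ↑a ∈ P.support} q
      (by exact P.start_mem_support)
      (by exact fun h => hP.2.1 w₀ h hw₀c)
  have hGadj : G.Adj (↑zs) (↑ws) := hadjzw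
  have hzP : (zs : V) ∈ P.support := hzT
  have hwP : (ws : V) ∉ P.support := hwT
  have hwy : (ws : V) ≠ y₁ := by
    have := ws.prop
    simp only [Finset.coe_singleton, Set.mem_compl_iff, Set.mem_singleton_iff] at this
    exact this
  have hwc : (ws : V) ∈ c.support := by
    by_contra h
    exact hwP (rot_absorb hP hp hx21 hzP hGadj h)
  have hz1 : (zs : V) ≠ x₁ := by
    intro h
    have hadjW : G.Adj x₁ ↑ws := h ▸ hGadj
    have : (ws : V) ∈ NC G c x₁ := by
      rw [NC, Finset.mem_filter, SimpleGraph.mem_neighborFinset]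
      exact ⟨hadjW, hwc⟩
    rw [h1, Finset.mem_singleton] at this
    exact hwy this
  have hz2 : (zs : V) ≠ x₂ := by
    intro h
    have hadjW : G.Adj x₂ ↑ws := h ▸ hGadj
    have : (ws : V) ∈ NC G c x₂ := by
      rw [NC, Finset.mem_filter, SimpleGraph.mem_neighborFinset]
      exact ⟨hadjW, hwc⟩
    rw [h2, Finset.mem_singleton] at this
    exact hwy this
  obtain ⟨zp, hedge, hidx, hzpne⟩ := pred_spec P hP.1.support_nodup hzP hz1
  have hzpsup : zp ∈ P.support := P.fst_mem_support_of_mem_edges hedge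
  exact ⟨zs, ws, zp, hzP, hz1, hz2, hwc, hwy, hGadj, hedge, hidx,
    hadj2 zp hzpsup hzpne⟩
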